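/- arXiv:2210.16138 — 2 statements merged into one kernel-verified Lean document; each statement's English description precedes it below -/
import Mathlib

section
/- Let Y = Z^r with standard basis e_1,...,e_r, and let B: Y × Y → Z be the symmetric bilinear form with B(e_i,e_i) = 2p and B(e_i,e_j) = q for i ≠ j, where p, q ∈ Z. If n divides q, then the sublattice Y_{Q,n} = {y ∈ Y : B(y,z) ∈ nZ for all z ∈ Y} equals n_α·Y, where n_α = n/gcd(2p, n). -/
lemma key_dvd (a : ℤ) (n : ℕ) (hn : 0 < n) (y : ℤ) :
    (n:ℤ) ∣ a * y ↔ ((n / Int.gcd a n : ℕ) : ℤ) ∣ y := by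
  set g : ℕ := Int.gcd a n with hgdef
  have hg : 0 < g := Int.gcd_pos_of_ne_zero_right a (by exact_mod_cast hn.ne')
  have hga : (g:ℤ) ∣ a := Int.gcd_dvd_left a n
  have hgn : (g:ℤ) ∣ (n:ℤ) := Int.gcd_dvd_right a n
  have hcop : Int.gcd (a / g) ((n:ℤ) / g) = 1 := Int.gcd_div_gcd_div_gcd hg
  have hIs : IsCoprime (a / g) ((n:ℤ) / g) := Int.isCoprime_iff_gcd_eq_one.mpr hcop
  have hcast : ((n / g : ℕ) : ℤ) = (n:ℤ) / g := by
    exact Int.natCast_ediv n g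
  have ha : a = g * (a / g) := (Int.mul_ediv_cancel' hga).symm
  have hn2 : (n:ℤ) = g * ((n:ℤ) / g) := (Int.mul_ediv_cancel' hgn).symm
  rw [hcast]
  constructor
  · intro h
    rw [hn2, ha] at h
    rw [mul_assoc] at h
    have h2 : ((n:ℤ)/g) ∣ (a/g) * y :=
      (mul_dvd_mul_iff_left (by exact_mod_cast hg.ne' : (g:ℤ) ≠ 0)).mp h
    exact hIs.symm.dvd_of_dvd_mul_left h2
  · intro h
    calc (n:ℤ) = g * ((n:ℤ)/g) := hn2
    _ ∣ a * y := by
        rw [ha, mul_assoc]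
        exact mul_dvd_mul_left _ (Dvd.dvd.mul_left h _)

/-- For the bilinear form `B` on `Y = ℤ^r` with `B(e_i,e_i) = 2p` and `B(e_i,e_j) = q`
for `i ≠ j`, if `n ∣ q` then `Y_{Q,n} = {y : ∀ z, n ∣ B(y,z)}` equals `n_α·Y` where
`n_α = n / gcd(2p, n)`. -/
theorem stmt10 (r : ℕ) (p q : ℤ) (n : ℕ) (hn : 0 < n) (hq : (n : ℤ) ∣ q)
    (B : (Fin r → ℤ) → (Fin r → ℤ) → ℤ)
    (hB : ∀ y z, B y z = ∑ i, ∑ j, (if i = j then 2 * p else q) * y i * z j) :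
    {y : Fin r → ℤ | ∀ z, (n : ℤ) ∣ B y z} =
      {y : Fin r → ℤ | ∀ i, ((n / Int.gcd (2 * p) n : ℕ) : ℤ) ∣ y i} := by
  ext y
  simp only [Set.mem_setOf_eq]
  constructor
  · intro h i
    have hb := h (fun j => if j = i then 1 else 0)
    rw [hB] at hb
    simp only [mul_ite, mul_one, mul_zero, Finset.sum_ite_eq', Finset.mem_univ,
      if_true] at hb
    have hS : ∑ i', (if i' = i then 2*p else q) * y i'
        = (2*p - q) * y i + q * ∑ i', y i' := by
      have h0 : (2*p - q) * y i = ∑ i', if i' = i then (2*p - q) * y i' else 0 := by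
        simp [Finset.sum_ite_eq']
      rw [h0, Finset.mul_sum, ← Finset.sum_add_distrib]
      apply Finset.sum_congr rfl
      intro j _
      by_cases hj : j = i
      · subst hj; simp; ring
      · simp [hj]
    rw [hS] at hb
    have h1 : (n:ℤ) ∣ q * ∑ i', y i' := hq.mul_right _
    have h2 : (n:ℤ) ∣ (2*p - q) * y i := (Int.dvd_add_right h1).mp (by rwa [add_comm] at hb)
    have h3 : (n:ℤ) ∣ 2*p*y i := by
      have := dvd_add h2 (hq.mul_right (y i))
      have e : (2*p - q) * y i + q * y i = 2*p*y i := by ring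
      rwa [e] at this
    exact (key_dvd (2*p) n hn (y i)).mp h3
  · intro h z
    rw [hB]
    apply Finset.dvd_sum
    intro i _
    apply Finset.dvd_sum
    intro j _
    by_cases hij : i = j
    · simp only [hij, if_pos rfl]
      exact ((key_dvd (2*p) n hn (y j)).mpr (h j)).mul_right _
    · simp only [if_neg hij]
      exact (hq.mul_right _).mul_right _
end

section
/- Let Y = Z^r and let B be the symmetric bilinear form on Y with B(e_i,e_i) = 2p and B(e_i,e_j) = 2p+1 for i ≠ j (the Kazhdan–Patterson case Q(α∨) = −1). Then the quotient group Y_{Q,n}/nY has order gcd(n, 2rp + r − 1), where Y_{Q,n} = {y ∈ Y : B(y,z) ∈ nZ for all z ∈ Y}. -/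
lemma card_ker_mul (n : ℕ) (hn : 0 < n) (g : ℤ) :
    Nat.card {s : ZMod n // (g : ZMod n) * s = 0} = Int.gcd g n := by
  haveI : NeZero n := ⟨hn.ne'⟩
  set c : ZMod n := (g : ZMod n) with hc
  let f : ZMod n →+ ZMod n := AddMonoidHom.mulLeft c
  have h1 : Nat.card {s : ZMod n // (g : ZMod n) * s = 0} = Nat.card f.ker :=
    Nat.card_congr (Equiv.subtypeEquivRight (fun s => by
      simp [f, AddMonoidHom.mem_ker, hc]))
  have hrange : f.range = AddSubgroup.zmultiples c := by
    ext x
    simp only [AddMonoidHom.mem_range, AddSubgroup.mem_zmultiples_iff]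
    constructor
    · rintro ⟨y, rfl⟩
      obtain ⟨k, rfl⟩ := ZMod.intCast_surjective y
      exact ⟨k, by simp [f, zsmul_eq_mul, mul_comm]⟩
    · rintro ⟨k, rfl⟩
      exact ⟨(k : ZMod n), by simp [f, zsmul_eq_mul, mul_comm]⟩
  have horder : addOrderOf c = n / Nat.gcd n g.natAbs := by
    rcases Int.natAbs_eq g with h | h
    · rw [hc, h, Int.cast_natCast]
      exact ZMod.addOrderOf_coe _ hn.ne'
    · rw [hc, h, Int.cast_neg, Int.cast_natCast, addOrderOf_neg]
      simp only [Int.natAbs_neg, Int.natAbs_natCast]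
      exact ZMod.addOrderOf_coe _ hn.ne'
  have hcard_range : Nat.card f.range = n / Nat.gcd n g.natAbs := by
    rw [hrange, Nat.card_zmultiples, horder]
  have h2 : Nat.card (ZMod n) = Nat.card (ZMod n ⧸ f.ker) * Nat.card f.ker :=
    AddSubgroup.card_eq_card_quotient_mul_card_addSubgroup f.ker
  have h3 : Nat.card (ZMod n ⧸ f.ker) = Nat.card f.range :=
    Nat.card_congr (QuotientAddGroup.quotientKerEquivRange f).toEquiv
  set d := Nat.gcd n g.natAbs with hd
  have hdvd : d ∣ n := Nat.gcd_dvd_left n g.natAbs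
  have hpos : 0 < n / d := Nat.div_pos (Nat.le_of_dvd hn hdvd) (Nat.gcd_pos_of_pos_left _ hn)
  have h4 : (n / d) * Nat.card f.ker = n := by
    rw [← hcard_range, ← h3, ← h2, Nat.card_zmod]
  have h5 : Nat.card f.ker = d :=
    Nat.eq_of_mul_eq_mul_left hpos (h4.trans (Nat.div_mul_cancel hdvd).symm)
  rw [h1, h5, Int.gcd]
  simp [Nat.gcd_comm, hd]


/-- For the Kazhdan–Patterson bilinear form `B` on `Y = ℤ^r` with `B(e_i,e_i) = 2p` and
`B(e_i,e_j) = 2p+1` for `i ≠ j`, the quotient `Y_{Q,n}/nY` (realized as the image of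
`Y_{Q,n}` in `(ℤ/nℤ)^r`) has order `gcd(n, 2rp + r − 1)`. -/
theorem stmt11 (r : ℕ) (hr : 0 < r) (p : ℤ) (n : ℕ) (hn : 0 < n)
    (B : (Fin r → ℤ) → (Fin r → ℤ) → ℤ)
    (hB : ∀ y z, B y z = ∑ i, ∑ j, (if i = j then 2 * p else 2 * p + 1) * y i * z j) :
    Nat.card {x : Fin r → ZMod n //
        ∃ y : Fin r → ℤ, (∀ z, (n : ℤ) ∣ B y z) ∧ ∀ i, ((y i : ℤ) : ZMod n) = x i} =
      Int.gcd (2 * (r : ℤ) * p + (r : ℤ) - 1) (n : ℤ) := by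
  haveI : NeZero n := ⟨hn.ne'⟩
  set g : ℤ := 2 * (r : ℤ) * p + (r : ℤ) - 1 with hg
  have key : ∀ y z : Fin r → ℤ,
      B y z = (2 * p + 1) * (∑ i, y i) * (∑ j, z j) - ∑ i, y i * z i := by
    intro y z
    rw [hB]
    have h : ∀ i j : Fin r, (if i = j then 2 * p else 2 * p + 1) * y i * z j
        = (2 * p + 1) * y i * z j - (if i = j then y i * z j else 0) := by
      intro i j; split <;> ring
    simp_rw [h, Finset.sum_sub_distrib, Finset.sum_ite_eq, Finset.mem_univ, if_true]
    have e : (∑ i, ∑ j, (2 * p + 1) * y i * z j) = ((2 * p + 1) * ∑ i, y i) * ∑ j, z j := by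
      simp_rw [Finset.mul_sum, Finset.sum_mul, mul_assoc]
      exact Finset.sum_comm
    rw [e]
  -- membership lemma
  have memF : ∀ s : ZMod n, (g : ZMod n) * s = 0 →
      ∃ y : Fin r → ℤ, (∀ z, (n : ℤ) ∣ B y z) ∧
        ∀ i, ((y i : ℤ) : ZMod n) = ((2 * p + 1 : ℤ) : ZMod n) * s := by
    intro s hs
    obtain ⟨S, rfl⟩ := ZMod.intCast_surjective s
    have hnd : (n : ℤ) ∣ g * S := by
      have : ((g * S : ℤ) : ZMod n) = 0 := by push_cast; exact hs
      exact (ZMod.intCast_zmod_eq_zero_iff_dvd _ _).mp this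
    refine ⟨fun _ => (2 * p + 1) * S, fun z => ?_, fun i => by push_cast; ring⟩
    rw [key]
    have hsum : (∑ _i : Fin r, (2 * p + 1) * S) = (r : ℤ) * ((2 * p + 1) * S) := by
      simp [Finset.sum_const, mul_comm]
    have hsum2 : (∑ i : Fin r, (2 * p + 1) * S * z i) = (2 * p + 1) * S * ∑ i, z i := by
      rw [← Finset.mul_sum]
    rw [hsum, hsum2]
    have : (2 * p + 1) * ((r : ℤ) * ((2 * p + 1) * S)) * (∑ j, z j)
        - (2 * p + 1) * S * ∑ i, z i = (g * S) * ((2 * p + 1) * ∑ j, z j) := by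
      rw [hg]; ring
    rw [this]
    exact hnd.mul_right _
  let F : {s : ZMod n // (g : ZMod n) * s = 0} →
      {x : Fin r → ZMod n // ∃ y : Fin r → ℤ, (∀ z, (n : ℤ) ∣ B y z) ∧
        ∀ i, ((y i : ℤ) : ZMod n) = x i} :=
    fun s => ⟨fun _ => ((2 * p + 1 : ℤ) : ZMod n) * s.1, memF s.1 s.2⟩
  have hinj : Function.Injective F := by
    rintro ⟨s, hs⟩ ⟨s', hs'⟩ h
    have h0 : ((2 * p + 1 : ℤ) : ZMod n) * s = ((2 * p + 1 : ℤ) : ZMod n) * s' :=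
      congrFun (congrArg Subtype.val h) ⟨0, hr⟩
    have hu : ((2 * p + 1 : ℤ) : ZMod n) * (s - s') = 0 := by
      rw [mul_sub, h0, sub_self]
    have hgu : (g : ZMod n) * (s - s') = 0 := by rw [mul_sub, hs, hs', sub_self]
    have hg1 : ((g : ZMod n) + 1) = (r : ZMod n) * ((2 * p + 1 : ℤ) : ZMod n) := by
      rw [hg]; push_cast; ring
    have : s - s' = 0 := by
      have := congrArg (· * (s - s')) hg1
      simp only [add_mul, hgu, one_mul, zero_add, mul_assoc, hu, mul_zero] at this
      exact this
    exact Subtype.ext (sub_eq_zero.mp this)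
  have hsurj : Function.Surjective F := by
    rintro ⟨x, y, hdvd, hcast⟩
    set S : ℤ := ∑ i, y i with hS
    have hgS : (n : ℤ) ∣ g * S := by
      have h1 := hdvd (fun _ => 1)
      rw [key] at h1
      have : (2 * p + 1) * (∑ i, y i) * (∑ _j : Fin r, (1 : ℤ)) - ∑ i, y i * 1
          = g * S := by
        simp only [Finset.sum_const, Finset.card_univ, Fintype.card_fin, nsmul_eq_mul,
          mul_one, hg, hS]
        ring
      rwa [this] at h1
    have hsmem : (g : ZMod n) * ((S : ℤ) : ZMod n) = 0 := by
      have : ((g * S : ℤ) : ZMod n) = 0 := (ZMod.intCast_zmod_eq_zero_iff_dvd _ _).mpr hgS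
      push_cast at this
      exact this
    refine ⟨⟨((S : ℤ) : ZMod n), hsmem⟩, ?_⟩
    apply Subtype.ext
    funext i
    have hdi : (n : ℤ) ∣ (2 * p + 1) * S - y i := by
      have h1 := hdvd (fun j => if j = i then 1 else 0)
      rw [key] at h1
      have e1 : (∑ j : Fin r, if j = i then (1 : ℤ) else 0) = 1 := by simp
      have e2 : (∑ j : Fin r, y j * if j = i then (1 : ℤ) else 0) = y i := by
        simp [mul_ite]
      rwa [e1, e2, mul_one, ← hS] at h1
    have : (((2 * p + 1) * S - y i : ℤ) : ZMod n) = 0 :=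
      (ZMod.intCast_zmod_eq_zero_iff_dvd _ _).mpr hdi
    push_cast at this
    have h2 : ((2 * p + 1 : ℤ) : ZMod n) * ((S : ℤ) : ZMod n) = ((y i : ℤ) : ZMod n) := by
      push_cast
      linear_combination this
    exact h2.trans (hcast i)
  have hcard := Nat.card_congr (Equiv.ofBijective F ⟨hinj, hsurj⟩)
  rw [card_ker_mul n hn g] at hcard
  exact hcard.symm
end
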